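/- For every k ≥ 1 and n ≥ k, the Stirling number of the second kind S(n,k) equals the sum over all compositions n_1 + ⋯ + n_k = n into k positive parts of ∏_{j=1}^k j^(n_j - 1). -/

import Mathlib

/-- The Stirling number of the second kind `S(n,k)`: the number of partitions
of an `n`-element set into exactly `k` nonempty blocks. -/
def stirlingSecond (n k : ℕ) : ℕ :=
  Fintype.card {P : Finpartition (Finset.univ : Finset (Fin n)) // P.parts.card = k}



open Finset

def st : ℕ → ℕ → ℕ
  | 0, 0 => 1
  | 0, _+1 => 0
  | _+1, 0 => 0
  | n+1, k+1 => st n k + (k+1) * st n (k+1)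

namespace StirlingAux

variable {α : Type*} [DecidableEq α] {s : Finset α} {a : α}

lemma not_mem_parts (ha : a ∉ s) (Q : Finpartition s) {t : Finset α} (ht : t ∈ Q.parts) :
    a ∉ t := fun h => ha (Q.le ht h)

lemma parts_not_subset {Q : Finpartition s} {d t : Finset α} (hd : d ∈ Q.parts)
    (ht : t ∈ Q.parts) (hne : d ≠ t) : ¬ d ⊆ t := fun hsub =>
  Q.ne_bot hd ((Q.disjoint hd ht hne).eq_bot_of_le hsub)

lemma avoid_parts_erase (Q : Finpartition s) {t : Finset α} (ht : t ∈ Q.parts) :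
    (Q.avoid t).parts = Q.parts.erase t := by
  ext u
  rw [Finpartition.mem_avoid, mem_erase]
  constructor
  · rintro ⟨d, hd, hsub, rfl⟩
    have hne : d ≠ t := fun h => hsub (h ▸ le_refl _)
    have hdt : d \ t = d := by
      rw [Finset.sdiff_eq_self_iff_disjoint]
      exact Q.disjoint hd ht hne
    rw [hdt]
    exact ⟨hne, hd⟩
  · rintro ⟨hne, hu⟩
    refine ⟨u, hu, parts_not_subset hu ht hne, ?_⟩
    rw [Finset.sdiff_eq_self_iff_disjoint]
    exact Q.disjoint hu ht hne

lemma cons_sdiff_singleton (ha : a ∉ s) : s.cons a ha \ {a} = s := by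
  ext x
  simp only [mem_sdiff, mem_cons, mem_singleton]
  constructor
  · rintro ⟨(rfl | h), hne⟩
    · exact absurd rfl hne
    · exact h
  · intro h
    exact ⟨Or.inr h, fun hx => ha (hx ▸ h)⟩

/-- Restrict a finpartition of `s.cons a ha` to `s` by deleting `a`. -/
def restrict (ha : a ∉ s) (P : Finpartition (s.cons a ha)) : Finpartition s :=
  (P.avoid {a}).copy (cons_sdiff_singleton ha)

lemma restrict_parts (ha : a ∉ s) (P : Finpartition (s.cons a ha)) :
    (restrict ha P).parts = (P.avoid {a}).parts := rfl

lemma a_mem_part (ha : a ∉ s) (P : Finpartition (s.cons a ha)) : a ∈ P.part a :=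
  P.mem_part (mem_cons_self a s)

lemma part_mem' (ha : a ∉ s) (P : Finpartition (s.cons a ha)) : P.part a ∈ P.parts :=
  P.part_mem.2 (mem_cons_self a s)

lemma not_mem_of_ne_part (ha : a ∉ s) (P : Finpartition (s.cons a ha)) {d : Finset α}
    (hd : d ∈ P.parts) (hne : d ≠ P.part a) : a ∉ d := fun h =>
  hne (P.eq_of_mem_parts hd (part_mem' ha P) h (a_mem_part ha P))

lemma restrict_parts_sing (ha : a ∉ s) (P : Finpartition (s.cons a ha))
    (hsing : P.part a = {a}) : (restrict ha P).parts = P.parts.erase {a} := by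
  rw [restrict_parts]
  ext u
  rw [Finpartition.mem_avoid, mem_erase]
  constructor
  · rintro ⟨d, hd, hsub, rfl⟩
    have hne : d ≠ P.part a := fun h => hsub (by rw [h, hsing])
    have had : a ∉ d := not_mem_of_ne_part ha P hd hne
    have hdt : d \ {a} = d := by
      rw [Finset.sdiff_eq_self_iff_disjoint, Finset.disjoint_singleton_right]
      exact had
    rw [hdt]
    exact ⟨hsing ▸ hne, hd⟩
  · rintro ⟨hne, hu⟩
    have hne' : u ≠ P.part a := hsing ▸ hne
    have hau : a ∉ u := not_mem_of_ne_part ha P hu hne'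
    refine ⟨u, hu, ?_, ?_⟩
    · intro hsub
      obtain ⟨x, hx⟩ := P.nonempty_of_mem_parts hu
      have := hsub hx
      rw [mem_singleton] at this
      exact hau (this ▸ hx)
    · rw [Finset.sdiff_eq_self_iff_disjoint, Finset.disjoint_singleton_right]
      exact hau

lemma erase_part_nonempty (ha : a ∉ s) (P : Finpartition (s.cons a ha))
    (hns : P.part a ≠ {a}) : ((P.part a).erase a).Nonempty := by
  rw [Finset.erase_nonempty (a_mem_part ha P)]
  rcases (P.nonempty_of_mem_parts (part_mem' ha P)).exists_eq_singleton_or_nontrivial with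
    ⟨x, hx⟩ | h
  · exfalso
    apply hns
    have hax := a_mem_part ha P
    rw [hx, mem_singleton] at hax
    rw [hx, hax]
  · exact h

lemma erase_part_not_mem (ha : a ∉ s) (P : Finpartition (s.cons a ha))
    (hns : P.part a ≠ {a}) : (P.part a).erase a ∉ P.parts.erase (P.part a) := by
  intro hmem
  rw [mem_erase] at hmem
  obtain ⟨hne, hd⟩ := hmem
  obtain ⟨x, hx⟩ := erase_part_nonempty ha P hns
  have hx1 : x ∈ P.part a := mem_of_mem_erase hx
  have hx2 : x ∈ (P.part a).erase a := hx
  exact Finset.disjoint_left.1 (P.disjoint hd (part_mem' ha P) hne) hx2 hx1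

lemma restrict_parts_nonsing (ha : a ∉ s) (P : Finpartition (s.cons a ha))
    (hns : P.part a ≠ {a}) :
    (restrict ha P).parts = insert ((P.part a).erase a) (P.parts.erase (P.part a)) := by
  rw [restrict_parts]
  ext u
  rw [Finpartition.mem_avoid, mem_insert, mem_erase]
  constructor
  · rintro ⟨d, hd, hsub, rfl⟩
    by_cases hne : d = P.part a
    · subst hne
      left
      rw [Finset.sdiff_singleton_eq_erase]
    · right
      have had : a ∉ d := not_mem_of_ne_part ha P hd hne
      have hdt : d \ {a} = d := by
        rw [Finset.sdiff_eq_self_iff_disjoint, Finset.disjoint_singleton_right]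
        exact had
      rw [hdt]
      exact ⟨hne, hd⟩
  · rintro (rfl | ⟨hne, hu⟩)
    · refine ⟨P.part a, part_mem' ha P, ?_, ?_⟩
      · intro hsub
        apply hns
        exact Finset.subset_singleton_iff.1 hsub |>.resolve_left
          (Finset.nonempty_iff_ne_empty.1 (P.nonempty_of_mem_parts (part_mem' ha P)))
      · rw [Finset.sdiff_singleton_eq_erase]
    · have hau : a ∉ u := not_mem_of_ne_part ha P hu hne
      refine ⟨u, hu, ?_, ?_⟩
      · intro hsub
        obtain ⟨x, hx⟩ := P.nonempty_of_mem_parts hu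
        have := hsub hx
        rw [mem_singleton] at this
        exact hau (this ▸ hx)
      · rw [Finset.sdiff_eq_self_iff_disjoint, Finset.disjoint_singleton_right]
        exact hau

/-- Extend a finpartition of `s` by the singleton part `{a}`. -/
def addSingleton (ha : a ∉ s) (Q : Finpartition s) : Finpartition (s.cons a ha) :=
  Q.extend (b := {a}) (by simp) (by simp [ha])
    (by rw [sup_eq_union]; ext x; simp [Finset.mem_cons, or_comm])

lemma addSingleton_parts (ha : a ∉ s) (Q : Finpartition s) :
    (addSingleton ha Q).parts = insert {a} Q.parts := rfl

lemma addSingleton_part (ha : a ∉ s) (Q : Finpartition s) :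
    (addSingleton ha Q).part a = {a} :=
  Finpartition.part_eq_of_mem _ (by rw [addSingleton_parts]; exact mem_insert_self _ _)
    (mem_singleton_self a)

/-- Extend a finpartition of `s` by adding `a` to the part `t`. -/
def addTo (ha : a ∉ s) (Q : Finpartition s) (t : Finset α) (ht : t ∈ Q.parts) :
    Finpartition (s.cons a ha) :=
  (Q.avoid t).extend (b := insert a t) (by simp)
    (by
      rw [Finset.disjoint_left]
      intro x hx hx2
      rw [mem_sdiff] at hx
      rw [mem_insert] at hx2
      rcases hx2 with rfl | hx2
      · exact ha (hx.1)
      · exact hx.2 hx2)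
    (by
      have hts : t ⊆ s := Q.le ht
      rw [sup_eq_union]
      ext x
      simp only [mem_union, mem_sdiff, mem_insert, mem_cons]
      constructor
      · rintro (⟨h, _⟩ | rfl | h)
        · exact Or.inr h
        · exact Or.inl rfl
        · exact Or.inr (hts h)
      · rintro (rfl | h)
        · exact Or.inr (Or.inl rfl)
        · by_cases hxt : x ∈ t
          · exact Or.inr (Or.inr hxt)
          · exact Or.inl ⟨h, hxt⟩)

lemma addTo_parts (ha : a ∉ s) (Q : Finpartition s) (t : Finset α) (ht : t ∈ Q.parts) :
    (addTo ha Q t ht).parts = insert (insert a t) (Q.parts.erase t) := by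
  show insert (insert a t) (Q.avoid t).parts = _
  rw [avoid_parts_erase Q ht]

lemma addTo_part (ha : a ∉ s) (Q : Finpartition s) (t : Finset α) (ht : t ∈ Q.parts) :
    (addTo ha Q t ht).part a = insert a t :=
  Finpartition.part_eq_of_mem _ (by rw [addTo_parts]; exact mem_insert_self _ _)
    (mem_insert_self a t)

lemma singleton_not_mem (ha : a ∉ s) (Q : Finpartition s) : {a} ∉ Q.parts :=
  fun h => not_mem_parts ha Q h (mem_singleton_self a)

lemma insert_a_not_mem (ha : a ∉ s) (Q : Finpartition s) (t : Finset α) (u : Finset α)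
    (hu : u ∈ Q.parts) : insert a t ≠ u := fun h =>
  not_mem_parts ha Q hu (h ▸ mem_insert_self a t)

end StirlingAux

namespace StirlingAux

variable {α : Type*} [DecidableEq α] {s : Finset α} {a : α}

/-- Partitions of `s.cons a ha` in which `a` is a singleton part correspond to
partitions of `s`. -/
def E1 (ha : a ∉ s) (k : ℕ) :
    {P : Finpartition (s.cons a ha) // P.parts.card = k + 1 ∧ P.part a = {a}} ≃
      {Q : Finpartition s // Q.parts.card = k} where
  toFun P := ⟨restrict ha P.1, by
    rw [restrict_parts_sing ha P.1 P.2.2,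
      card_erase_of_mem (by have h := part_mem' ha P.1; rwa [P.2.2] at h), P.2.1]
    omega⟩
  invFun Q := ⟨addSingleton ha Q.1, by
    constructor
    · rw [addSingleton_parts, card_insert_of_notMem (singleton_not_mem ha Q.1), Q.2]
    · exact addSingleton_part ha Q.1⟩
  left_inv P := by
    apply Subtype.ext
    apply Finpartition.ext
    rw [addSingleton_parts, restrict_parts_sing ha P.1 P.2.2,
      insert_erase (by have h := part_mem' ha P.1; rwa [P.2.2] at h)]
  right_inv Q := by
    apply Subtype.ext
    apply Finpartition.ext
    rw [restrict_parts_sing ha _ (addSingleton_part ha Q.1), addSingleton_parts,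
      erase_insert (singleton_not_mem ha Q.1)]

/-- Partitions of `s.cons a ha` in which `a` is not a singleton part correspond to
partitions of `s` together with a chosen part (into which `a` is inserted). -/
def E2 (ha : a ∉ s) (k : ℕ) :
    {P : Finpartition (s.cons a ha) // P.parts.card = k + 1 ∧ P.part a ≠ {a}} ≃
      Σ Q : {Q : Finpartition s // Q.parts.card = k + 1}, {t // t ∈ Q.1.parts} where
  toFun P := ⟨⟨restrict ha P.1, by
      rw [restrict_parts_nonsing ha P.1 P.2.2,
        card_insert_of_notMem (erase_part_not_mem ha P.1 P.2.2),
        card_erase_of_mem (part_mem' ha P.1), P.2.1]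
      omega⟩,
    ⟨(P.1.part a).erase a, by
      rw [restrict_parts_nonsing ha P.1 P.2.2]
      exact mem_insert_self _ _⟩⟩
  invFun Qt := ⟨addTo ha Qt.1.1 Qt.2.1 Qt.2.2, by
    have ht := Qt.2.2
    constructor
    · rw [addTo_parts,
        card_insert_of_notMem (fun h => insert_a_not_mem ha Qt.1.1 Qt.2.1 _
          (mem_of_mem_erase h) rfl),
        card_erase_of_mem ht, Qt.1.2]
      omega
    · rw [addTo_part]
      intro h
      obtain ⟨x, hx⟩ := Qt.1.1.nonempty_of_mem_parts ht
      have hxa : x ∈ ({a} : Finset α) := h ▸ mem_insert_of_mem hx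
      rw [mem_singleton] at hxa
      exact not_mem_parts ha Qt.1.1 ht (hxa ▸ hx)⟩
  left_inv P := by
    apply Subtype.ext
    apply Finpartition.ext
    dsimp only
    rw [addTo_parts, insert_erase (a_mem_part ha P.1),
      restrict_parts_nonsing ha P.1 P.2.2,
      erase_insert (erase_part_not_mem ha P.1 P.2.2),
      insert_erase (part_mem' ha P.1)]
  right_inv Qt := by
    obtain ⟨⟨Q, hQ⟩, ⟨t, ht⟩⟩ := Qt
    have hat : a ∉ t := not_mem_parts ha Q ht
    have hpart : (addTo ha Q t ht).part a = insert a t := addTo_part ha Q t ht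
    have hparts : (restrict ha (addTo ha Q t ht)).parts = Q.parts := by
      have hns : (addTo ha Q t ht).part a ≠ {a} := by
        rw [hpart]
        intro h
        obtain ⟨x, hx⟩ := Q.nonempty_of_mem_parts ht
        have hxa : x ∈ ({a} : Finset α) := h ▸ mem_insert_of_mem hx
        rw [mem_singleton] at hxa
        exact hat (hxa ▸ hx)
      rw [restrict_parts_nonsing ha _ hns, hpart, erase_insert hat, addTo_parts,
        erase_insert (fun h => insert_a_not_mem ha Q t _ (mem_of_mem_erase h) rfl),
        insert_erase ht]
    refine Sigma.ext (Subtype.ext (Finpartition.ext hparts)) ?_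
    refine (Subtype.heq_iff_coe_eq ?_).2 ?_
    · intro x
      rw [hparts]
    · show ((addTo ha Q t ht).part a).erase a = t
      rw [hpart, erase_insert hat]

end StirlingAux

namespace StirlingAux

variable {α : Type*} [DecidableEq α]

theorem card_eq_st (s : Finset α) (k : ℕ) :
    Fintype.card {P : Finpartition s // P.parts.card = k} = st s.card k := by
  induction s using Finset.cons_induction generalizing k with
  | empty =>
    have hval : ∀ P : Finpartition (∅ : Finset α), P.parts = ∅ := fun P =>
      Finpartition.parts_eq_empty_iff.mpr Finset.bot_eq_empty.symm
    rw [Finset.card_empty]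
    cases k with
    | zero =>
      rw [show st 0 0 = 1 from rfl, Fintype.card_eq_one_iff]
      refine ⟨⟨(Finpartition.empty (Finset α)).copy Finset.bot_eq_empty, ?_⟩, ?_⟩
      · rw [Finset.card_eq_zero]; exact hval _
      · intro y
        exact Subtype.ext (Finpartition.ext (by rw [hval, hval]))
    | succ k =>
      rw [show st 0 (k+1) = 0 from rfl, Fintype.card_eq_zero_iff]
      refine ⟨fun P => ?_⟩
      have h := P.2
      rw [hval, Finset.card_empty] at h
      exact (Nat.succ_ne_zero k h.symm).elim
  | cons a s ha ih =>
    rw [Finset.card_cons]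
    cases k with
    | zero =>
      rw [show st (s.card + 1) 0 = 0 from rfl, Fintype.card_eq_zero_iff]
      refine ⟨fun P => ?_⟩
      have h := P.2
      rw [Finset.card_eq_zero] at h
      have := (Finpartition.parts_eq_empty_iff (P := P.1)).mp h
      have h2 : a ∈ (s.cons a ha) := mem_cons_self a s
      rw [this] at h2
      simp at h2
    | succ k =>
      show _ = st s.card k + (k+1) * st s.card (k+1)
      have hcongr := Fintype.card_congr
        (Equiv.sumCompl
          (fun x : {P : Finpartition (s.cons a ha) // P.parts.card = k+1} =>
            x.1.part a = {a})).symm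
      have h1 : Fintype.card {x : {P : Finpartition (s.cons a ha) // P.parts.card = k+1} //
          x.1.part a = {a}} = st s.card k := by
        rw [Fintype.card_congr
          ((Equiv.subtypeSubtypeEquivSubtypeInter _ _).trans (E1 ha k))]
        exact ih k
      have h2 : Fintype.card {x : {P : Finpartition (s.cons a ha) // P.parts.card = k+1} //
          ¬ x.1.part a = {a}} = (k+1) * st s.card (k+1) := by
        rw [Fintype.card_congr
          ((Equiv.subtypeSubtypeEquivSubtypeInter _ _).trans (E2 ha k))]
        rw [Fintype.card_sigma]
        have hc : ∀ Q : {Q : Finpartition s // Q.parts.card = k+1},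
            Fintype.card {t // t ∈ Q.1.parts} = k + 1 := fun Q => by
          rw [Fintype.card_coe, Q.2]
        rw [Finset.sum_congr rfl (fun Q _ => hc Q), Finset.sum_const, card_univ,
          smul_eq_mul, ih (k+1), mul_comm]
      rw [hcongr, Fintype.card_sum, h1, h2]

end StirlingAux

def fsum (n k : ℕ) : ℕ :=
  ∑ c ∈ (Finset.Nat.antidiagonalTuple k n).filter (fun c => ∀ j, 0 < c j),
        ∏ j : Fin k, ((j : ℕ) + 1) ^ (c j - 1)

lemma fsum_zero (n : ℕ) : fsum n 0 = st n 0 := by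
  cases n with
  | zero => decide
  | succ n =>
    show fsum (n+1) 0 = 0
    unfold fsum
    rw [Finset.Nat.antidiagonalTuple_zero_succ]
    simp

lemma fsum_zero' (k : ℕ) : fsum 0 (k+1) = 0 := by
  unfold fsum
  rw [Finset.Nat.antidiagonalTuple_zero_right]
  rw [Finset.sum_filter]
  simp only [Finset.sum_singleton]
  rw [if_neg]
  simp [Pi.zero_apply]


lemma fsum_rec (n k : ℕ) : fsum (n+1) (k+1) = fsum n k + (k+1) * fsum n (k+1) := by
  classical
  unfold fsum
  set S := (Finset.Nat.antidiagonalTuple (k+1) (n+1)).filter (fun c => ∀ j, 0 < c j) with hS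
  rw [← Finset.sum_filter_add_sum_filter_not S (fun c => c (Fin.last k) = 1)]
  congr 1
  · -- last coordinate = 1
    refine Finset.sum_nbij' (i := fun c => Fin.init c) (j := fun d => Fin.snoc d 1)
      ?_ ?_ ?_ ?_ ?_
    · intro c hc
      simp only [hS, Finset.mem_filter, Finset.Nat.mem_antidiagonalTuple, Finset.mem_filter] at hc
      obtain ⟨⟨hsum, hpos⟩, hlast⟩ := hc
      rw [Fin.sum_univ_castSucc, hlast] at hsum
      rw [Finset.mem_filter, Finset.Nat.mem_antidiagonalTuple]
      exact ⟨by simpa [Fin.init] using Nat.succ_injective hsum, fun j => hpos _⟩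
    · intro d hd
      rw [Finset.mem_filter, Finset.Nat.mem_antidiagonalTuple] at hd
      obtain ⟨hsum, hpos⟩ := hd
      simp only [hS, Finset.mem_filter, Finset.Nat.mem_antidiagonalTuple]
      refine ⟨⟨?_, ?_⟩, by simp⟩
      · rw [Fin.sum_univ_castSucc]
        simp [hsum]
      · intro j
        refine Fin.lastCases ?_ ?_ j
        · simp
        · intro i; simpa using hpos i
    · intro c hc
      simp only [hS, Finset.mem_filter] at hc
      have h := Fin.snoc_init_self c
      rwa [hc.2] at h
    · intro d _
      exact Fin.init_snoc _ _
    · intro c hc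
      simp only [hS, Finset.mem_filter] at hc
      rw [Fin.prod_univ_castSucc, hc.2]
      simp [Fin.init]
  · -- last coordinate ≥ 2
    rw [Finset.mul_sum]
    refine Finset.sum_nbij'
      (i := fun c => Function.update c (Fin.last k) (c (Fin.last k) - 1))
      (j := fun d => Function.update d (Fin.last k) (d (Fin.last k) + 1))
      ?_ ?_ ?_ ?_ ?_
    · intro c hc
      simp only [hS, Finset.mem_filter, Finset.Nat.mem_antidiagonalTuple] at hc
      obtain ⟨⟨hsum, hpos⟩, hlast⟩ := hc
      have h2 : 2 ≤ c (Fin.last k) := by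
        have := hpos (Fin.last k); omega
      rw [Finset.mem_filter, Finset.Nat.mem_antidiagonalTuple]
      constructor
      · rw [Fin.sum_univ_castSucc] at hsum ⊢
        rw [Function.update_self]
        have heq : ∀ i : Fin k, Function.update c (Fin.last k) (c (Fin.last k) - 1)
            (Fin.castSucc i) = c (Fin.castSucc i) := fun i =>
          Function.update_of_ne (Fin.castSucc_lt_last i).ne _ _
        rw [Finset.sum_congr rfl fun i _ => heq i]
        omega
      · intro j
        refine Fin.lastCases ?_ ?_ j
        · rw [Function.update_self]; omega
        · intro i
          rw [Function.update_of_ne (Fin.castSucc_lt_last i).ne]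
          exact hpos _
    · intro d hd
      rw [Finset.mem_filter, Finset.Nat.mem_antidiagonalTuple] at hd
      obtain ⟨hsum, hpos⟩ := hd
      simp only [hS, Finset.mem_filter, Finset.Nat.mem_antidiagonalTuple]
      refine ⟨⟨?_, ?_⟩, ?_⟩
      · rw [Fin.sum_univ_castSucc] at hsum ⊢
        rw [Function.update_self]
        have heq : ∀ i : Fin k, Function.update d (Fin.last k) (d (Fin.last k) + 1)
            (Fin.castSucc i) = d (Fin.castSucc i) := fun i =>
          Function.update_of_ne (Fin.castSucc_lt_last i).ne _ _
        rw [Finset.sum_congr rfl fun i _ => heq i]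
        omega
      · intro j
        refine Fin.lastCases ?_ ?_ j
        · rw [Function.update_self]; omega
        · intro i
          rw [Function.update_of_ne (Fin.castSucc_lt_last i).ne]
          exact hpos _
      · rw [Function.update_self]
        have := hpos (Fin.last k); omega
    · intro c hc
      simp only [hS, Finset.mem_filter, Finset.Nat.mem_antidiagonalTuple] at hc
      obtain ⟨⟨hsum, hpos⟩, hlast⟩ := hc
      have h2 : 1 ≤ c (Fin.last k) := hpos _
      rw [Function.update_self, Function.update_idem]
      have : c (Fin.last k) - 1 + 1 = c (Fin.last k) := by omega
      rw [this, Function.update_eq_self]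
    · intro d hd
      rw [Finset.mem_filter, Finset.Nat.mem_antidiagonalTuple] at hd
      rw [Function.update_self, Function.update_idem, Nat.add_sub_cancel,
        Function.update_eq_self]
    · intro c hc
      simp only [hS, Finset.mem_filter, Finset.Nat.mem_antidiagonalTuple] at hc
      obtain ⟨⟨hsum, hpos⟩, hlast⟩ := hc
      have h2 : 2 ≤ c (Fin.last k) := by have := hpos (Fin.last k); omega
      rw [Fin.prod_univ_castSucc, Fin.prod_univ_castSucc]
      have heq : ∀ i : Fin k, Function.update c (Fin.last k) (c (Fin.last k) - 1)
          (Fin.castSucc i) = c (Fin.castSucc i) := fun i =>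
        Function.update_of_ne (Fin.castSucc_lt_last i).ne _ _
      simp only [heq]
      rw [Function.update_self]
      have hval : ((Fin.last k : ℕ) + 1) ^ (c (Fin.last k) - 1)
          = (k+1) * ((Fin.last k : ℕ) + 1) ^ (c (Fin.last k) - 1 - 1) := by
        have h3 : c (Fin.last k) - 1 = (c (Fin.last k) - 1 - 1) + 1 := by omega
        rw [h3, pow_succ]
        simp [Fin.val_last, mul_comm]
      rw [hval]
      ring

lemma fsum_eq_st (n k : ℕ) : fsum n k = st n k := by
  induction n generalizing k with
  | zero =>
    cases k with
    | zero => exact fsum_zero 0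
    | succ k => rw [fsum_zero']; rfl
  | succ n ih =>
    cases k with
    | zero => exact fsum_zero (n+1)
    | succ k => rw [fsum_rec, ih, ih]; rfl

/-- For `k ≥ 1` and `n ≥ k`, `S(n,k)` equals the sum over all compositions
`n_1 + ⋯ + n_k = n` into `k` positive parts of `∏_{j=1}^k j^(n_j - 1)`. -/
theorem stmt6 (n k : ℕ) (hk : 1 ≤ k) (hn : k ≤ n) :
    stirlingSecond n k =
      ∑ c ∈ (Finset.Nat.antidiagonalTuple k n).filter (fun c => ∀ j, 0 < c j),
        ∏ j : Fin k, ((j : ℕ) + 1) ^ (c j - 1) := by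
  have h1 : stirlingSecond n k = st n k := by
    rw [stirlingSecond, StirlingAux.card_eq_st, Finset.card_univ, Fintype.card_fin]
  have h2 : fsum n k = ∑ c ∈ (Finset.Nat.antidiagonalTuple k n).filter (fun c => ∀ j, 0 < c j),
      ∏ j : Fin k, ((j : ℕ) + 1) ^ (c j - 1) := rfl
  rw [h1, ← fsum_eq_st, h2]
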